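/- arXiv:2204.11757 — 3 statements merged into one kernel-verified Lean document; each statement's English description precedes it below -/
import Mathlib

section
/- Let w_a, w_b be vectors in ℝⁿ equipped with the ℓ¹ norm, let d_a, d_b be positive real numbers, and let ε ≥ 0. If ‖(1/d_a)·w_a − (1/d_b)·w_b‖₁ ≤ ε, then ‖(1/d_a)·w_a − (1/(d_a+d_b))·(w_a + w_b)‖₁ ≤ ε/(d_a/d_b + 1), and in particular ‖(1/d_a)·w_a − (1/(d_a+d_b))·(w_a + w_b)‖₁ ≤ ε. -/
/-- If the normalized adjacency vectors of two nodes are within `ε` in `ℓ¹`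
norm, then the first node's normalized vector is within `ε/(d_a/d_b + 1)` (in particular,
within `ε`) of the merged super-node's normalized vector. -/
theorem merged_node_close {n : ℕ}
    (wa wb : PiLp 1 (fun _ : Fin n => ℝ))
    (da db : ℝ) (hda : 0 < da) (hdb : 0 < db)
    (ε : ℝ) (hε : 0 ≤ ε)
    (h : ‖(1 / da) • wa - (1 / db) • wb‖ ≤ ε) :
    ‖(1 / da) • wa - (1 / (da + db)) • (wa + wb)‖ ≤ ε / (da / db + 1) ∧
    ‖(1 / da) • wa - (1 / (da + db)) • (wa + wb)‖ ≤ ε := by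
  have hs : (0:ℝ) < da + db := by linarith
  have key : (1 / da) • wa - (1 / (da + db)) • (wa + wb)
      = (db / (da + db)) • ((1 / da) • wa - (1 / db) • wb) := by
    ext i
    simp only [PiLp.sub_apply, PiLp.smul_apply, PiLp.add_apply, smul_eq_mul]
    field_simp
    ring
  have hnorm : ‖(1 / da) • wa - (1 / (da + db)) • (wa + wb)‖
      = (db / (da + db)) * ‖(1 / da) • wa - (1 / db) • wb‖ := by
    rw [key, norm_smul, Real.norm_eq_abs, abs_of_pos (by positivity)]
  have h1 : ‖(1 / da) • wa - (1 / (da + db)) • (wa + wb)‖ ≤ ε / (da / db + 1) := by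
    rw [hnorm]
    have : ε / (da / db + 1) = (db / (da + db)) * ε := by field_simp
    rw [this]
    exact mul_le_mul_of_nonneg_left h (by positivity)
  refine ⟨h1, h1.trans ?_⟩
  rw [div_le_iff₀ (by positivity)]
  nlinarith [div_pos hda hdb]
end

section
/- Let w_a, w_b, w_c be vectors in ℝⁿ equipped with the ℓ¹ norm, let d_a, d_b, d_c be positive real numbers, and let ε ≥ 0. If ‖(1/d_c)·w_c − (1/d_a)·w_a‖₁ ≤ ε and ‖(1/d_a)·w_a − (1/d_b)·w_b‖₁ ≤ ε, then ‖(1/d_c)·w_c − (1/(d_a+d_b))·(w_a + w_b)‖₁ ≤ 2ε. -/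
/-- If node `c` is `ε`-close to node `a` (in normalized `ℓ¹` adjacency
distance) and nodes `a, b` are `ε`-close, then `c` is `2ε`-close to the super-node obtained
by merging `a` and `b`. -/
theorem close_to_supernode {n : ℕ}
    (wa wb wc : PiLp 1 (fun _ : Fin n => ℝ))
    (da db dc : ℝ) (hda : 0 < da) (hdb : 0 < db) (hdc : 0 < dc)
    (ε : ℝ) (hε : 0 ≤ ε)
    (hca : ‖(1 / dc) • wc - (1 / da) • wa‖ ≤ ε)
    (hab : ‖(1 / da) • wa - (1 / db) • wb‖ ≤ ε) :
    ‖(1 / dc) • wc - (1 / (da + db)) • (wa + wb)‖ ≤ 2 * ε := by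
  set u := (1 / dc) • wc
  set A := (1 / da) • wa
  set B := (1 / db) • wb
  have hs : 0 < da + db := by linarith
  have hcb : ‖u - B‖ ≤ 2 * ε := by
    calc ‖u - B‖ = ‖(u - A) + (A - B)‖ := by rw [sub_add_sub_cancel]
      _ ≤ ‖u - A‖ + ‖A - B‖ := norm_add_le _ _
      _ ≤ 2 * ε := by linarith
  have key : u - (1 / (da + db)) • (wa + wb)
      = (da / (da + db)) • (u - A) + (db / (da + db)) • (u - B) := by
    have h1 : (da / (da + db)) • A = (1 / (da + db)) • wa := by
      rw [smul_smul]; congr 1; field_simp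
    have h2 : (db / (da + db)) • B = (1 / (da + db)) • wb := by
      rw [smul_smul]; congr 1; field_simp
    have h3 : (da / (da + db)) + (db / (da + db)) = 1 := by field_simp
    calc u - (1 / (da + db)) • (wa + wb)
        = ((da / (da + db)) + (db / (da + db))) • u
          - ((1 / (da + db)) • wa + (1 / (da + db)) • wb) := by
          rw [h3, one_smul, smul_add]
      _ = (da / (da + db)) • (u - A) + (db / (da + db)) • (u - B) := by
          rw [smul_sub, smul_sub, h1, h2, add_smul]; abel
  rw [key]
  calc ‖(da / (da + db)) • (u - A) + (db / (da + db)) • (u - B)‖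
      ≤ ‖(da / (da + db)) • (u - A)‖ + ‖(db / (da + db)) • (u - B)‖ := norm_add_le _ _
    _ = (da / (da + db)) * ‖u - A‖ + (db / (da + db)) * ‖u - B‖ := by
        rw [norm_smul, norm_smul, Real.norm_eq_abs, Real.norm_eq_abs,
          abs_of_pos (by positivity), abs_of_pos (by positivity)]
    _ ≤ (da / (da + db)) * (2 * ε) + (db / (da + db)) * (2 * ε) := by
        have h1 : ‖u - A‖ ≤ 2 * ε := by linarith
        have := div_pos hda hs; have := div_pos hdb hs
        gcongr
    _ = 2 * ε := by field_simp
end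

section
/- Let n, n_c be positive integers with n_c ≤ n, π : Fin n → Fin n_c a surjective map with blocks B(x) = π⁻¹(π(x)), and let W : Fin n → Fin n → ℝ be a symmetric matrix with nonnegative entries and positive row sums. Define the coarsened weight matrix W_c : Fin n_c → Fin n_c → ℝ by W_c(a,b) = Σ_{x∈π⁻¹(a)} Σ_{y∈π⁻¹(b)} W(x,y), and the lifted weight matrix Ŵ : Fin n → Fin n → ℝ by Ŵ(x,y) = W_c(π(x),π(y)) / (|B(x)|·|B(y)|). Assume the row sums of W_c and of Ŵ are positive. Then every eigenvalue of the normalized Laplacian 𝓛(G_c) = I − D_c^{-1/2} W_c D_c^{-1/2} of the coarsened graph is also an eigenvalue of the normalized Laplacian 𝓛(Ĝ) = I − D̂^{-1/2} Ŵ D̂^{-1/2} of the lift, where D_c and D̂ are the diagonal matrices of row sums of W_c and Ŵ respectively. -/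
lemma aux_div1 (u cb cx : ℝ) (hb : cb ≠ 0) : cb * (u / (cx * cb)) = u / cx := by
  field_simp

lemma aux_div2 (u cb : ℝ) (hb : cb ≠ 0) : cb * (u / cb) = u := by
  field_simp

lemma aux_div3 (w t A Cy Dx Dy : ℝ) (hA : A ≠ 0) (hCy : Cy ≠ 0) (hDx : Dx ≠ 0)
    (hDy : Dy ≠ 0) :
    (Dx / A)⁻¹ * (w / (A * A * (Cy * Cy))) * ((Dy / Cy)⁻¹ * (t / Cy))
      = A⁻¹ * (Dx⁻¹ * w * (Dy⁻¹ * t)) / (Cy * Cy) := by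
  field_simp

lemma aux_lap_mulVec {m : ℕ} (A : Matrix (Fin m) (Fin m) ℝ) (f u : Fin m → ℝ) (a : Fin m) :
    ((1 - Matrix.diagonal f * A * Matrix.diagonal f).mulVec u) a
      = u a - ∑ b, f a * A a b * (f b * u b) := by
  rw [Matrix.sub_mulVec, Matrix.one_mulVec]
  simp only [Pi.sub_apply, Matrix.mulVec, dotProduct, Matrix.mul_diagonal, Matrix.diagonal_mul]
  congr 1
  exact Finset.sum_congr rfl fun b _ => by ring

/-- Jin–Loukas. Every eigenvalue of the normalized Laplacian of the
coarsened graph `G_c` (weights `W_c a b = ∑_{x∈π⁻¹ a} ∑_{y∈π⁻¹ b} W x y`) is also an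
eigenvalue of the normalized Laplacian of the lift `Ĝ`
(weights `Ŵ x y = W_c (π x) (π y) / (|B x|·|B y|)`). -/
theorem coarse_eigenvalues_are_lift_eigenvalues {n nc : ℕ}
    (hn : 0 < n) (hnc : 0 < nc) (hle : nc ≤ n)
    (π : Fin n → Fin nc) (hπ : Function.Surjective π)
    (B : Fin n → Finset (Fin n))
    (hB : ∀ x, B x = Finset.univ.filter (fun x' => π x' = π x))
    (W : Matrix (Fin n) (Fin n) ℝ) (hW : W.IsSymm) (hWnn : ∀ x y, 0 ≤ W x y)
    (hWpos : ∀ x, 0 < ∑ y, W x y)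
    -- the coarsened weight matrix
    (Wc : Matrix (Fin nc) (Fin nc) ℝ)
    (hWc : ∀ a b, Wc a b = ∑ x ∈ Finset.univ.filter (fun x => π x = a),
      ∑ y ∈ Finset.univ.filter (fun y => π y = b), W x y)
    -- the lifted weight matrix
    (What : Matrix (Fin n) (Fin n) ℝ)
    (hWhat : ∀ x y, What x y = Wc (π x) (π y) / ((B x).card * (B y).card))
    -- positive degrees of the coarsened graph and of the lift
    (dc : Fin nc → ℝ) (hdc : ∀ a, dc a = ∑ b, Wc a b) (hdcpos : ∀ a, 0 < dc a)
    (dhat : Fin n → ℝ) (hdhat : ∀ x, dhat x = ∑ y, What x y) (hdhatpos : ∀ x, 0 < dhat x)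
    -- the normalized Laplacians `𝓛 = I − D^{-1/2} A D^{-1/2}`
    (Lc : Matrix (Fin nc) (Fin nc) ℝ)
    (hLc : Lc = 1 - Matrix.diagonal (fun a => (Real.sqrt (dc a))⁻¹) * Wc *
      Matrix.diagonal (fun a => (Real.sqrt (dc a))⁻¹))
    (Lhat : Matrix (Fin n) (Fin n) ℝ)
    (hLhat : Lhat = 1 - Matrix.diagonal (fun x => (Real.sqrt (dhat x))⁻¹) * What *
      Matrix.diagonal (fun x => (Real.sqrt (dhat x))⁻¹)) :
    ∀ μ : ℝ, (∃ vc : Fin nc → ℝ, vc ≠ 0 ∧ Lc.mulVec vc = μ • vc) →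
      ∃ v : Fin n → ℝ, v ≠ 0 ∧ Lhat.mulVec v = μ • v := by
  rintro μ ⟨vc, hvc0, hvc⟩
  classical
  -- fiber cardinalities
  set c : Fin nc → ℝ := fun b => ((Finset.univ.filter (fun y => π y = b)).card : ℝ) with hc
  have hBc : ∀ x, ((B x).card : ℝ) = c (π x) := fun x => by rw [hB x]
  have hcpos : ∀ b, 0 < c b := by
    intro b
    obtain ⟨y, hy⟩ := hπ b
    have h0 : 0 < (Finset.univ.filter (fun z => π z = b)).card :=
      Finset.card_pos.2 ⟨y, by simp [hy]⟩
    simp only [hc]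
    exact_mod_cast h0
  have hsqc : ∀ b, 0 < Real.sqrt (c b) := fun b => Real.sqrt_pos.2 (hcpos b)
  have hsqd : ∀ a, 0 < Real.sqrt (dc a) := fun a => Real.sqrt_pos.2 (hdcpos a)
  -- degree relation: dhat x = dc (π x) / c (π x)
  have hd : ∀ x, dhat x = dc (π x) / c (π x) := by
    intro x
    rw [hdhat x]
    have : ∀ y, What x y = (fun b => Wc (π x) b / (c (π x) * c b)) (π y) := by
      intro y; rw [hWhat x y, hBc x, hBc y]
    rw [Finset.sum_congr rfl fun y _ => this y]
    rw [← Finset.sum_fiberwise' Finset.univ π (fun b => Wc (π x) b / (c (π x) * c b))]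
    rw [hdc, Finset.sum_div]
    refine Finset.sum_congr rfl fun b _ => ?_
    rw [Finset.sum_const, nsmul_eq_mul,
      show ((Finset.univ.filter (fun y => π y = b)).card : ℝ) = c b from rfl]
    exact aux_div1 _ _ _ (hcpos b).ne'
  -- sqrt of dhat
  have hsqdhat : ∀ x, Real.sqrt (dhat x) = Real.sqrt (dc (π x)) / Real.sqrt (c (π x)) := by
    intro x
    rw [hd x, Real.sqrt_div (hdcpos (π x)).le]
  -- eigenvector equation, componentwise
  have heig : ∀ a, vc a - ∑ b, (Real.sqrt (dc a))⁻¹ * Wc a b *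
      ((Real.sqrt (dc b))⁻¹ * vc b) = μ * vc a := by
    intro a
    have h := congrFun hvc a
    rw [hLc] at h
    rw [aux_lap_mulVec] at h
    simpa using h
  -- the lifted vector
  set v : Fin n → ℝ := fun x => vc (π x) / Real.sqrt (c (π x)) with hv
  refine ⟨v, ?_, ?_⟩
  · obtain ⟨a, ha⟩ := Function.ne_iff.1 hvc0
    obtain ⟨x, hx⟩ := hπ a
    intro h0
    apply ha
    have := congrFun h0 x
    rw [hv] at this
    simp only [hx, Pi.zero_apply, div_eq_zero_iff] at this
    rcases this with h | h
    · exact h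
    · exact absurd h (hsqc a).ne'
  · funext x
    rw [hLhat]
    have key : ∀ y, (Real.sqrt (dhat x))⁻¹ * What x y * ((Real.sqrt (dhat y))⁻¹ * v y)
        = (fun b => (Real.sqrt (c (π x)))⁻¹ * ((Real.sqrt (dc (π x)))⁻¹ * Wc (π x) b *
          ((Real.sqrt (dc b))⁻¹ * vc b)) / c b) (π y) := by
      intro y
      simp only
      rw [hWhat x y, hBc x, hBc y, hsqdhat x, hsqdhat y, hv]
      simp only
      have h1 := (hsqc (π x)).ne'
      have h2 := (hsqc (π y)).ne'
      have h3 := (hsqd (π x)).ne'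
      have h4 := (hsqd (π y)).ne'
      set A := Real.sqrt (c (π x)) with hA
      set Cy := Real.sqrt (c (π y)) with hCy
      rw [show c (π x) = A * A from (Real.mul_self_sqrt (hcpos _).le).symm,
          show c (π y) = Cy * Cy from (Real.mul_self_sqrt (hcpos _).le).symm]
      exact aux_div3 _ _ _ _ _ _ h1 h2 h3 h4
    have hsum : ∑ y, (Real.sqrt (dhat x))⁻¹ * What x y * ((Real.sqrt (dhat y))⁻¹ * v y)
        = (Real.sqrt (c (π x)))⁻¹ * ∑ b, (Real.sqrt (dc (π x)))⁻¹ * Wc (π x) b *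
          ((Real.sqrt (dc b))⁻¹ * vc b) := by
      rw [Finset.sum_congr rfl fun y _ => key y]
      rw [← Finset.sum_fiberwise' Finset.univ π
        (fun b => (Real.sqrt (c (π x)))⁻¹ * ((Real.sqrt (dc (π x)))⁻¹ * Wc (π x) b *
          ((Real.sqrt (dc b))⁻¹ * vc b)) / c b)]
      rw [Finset.mul_sum]
      refine Finset.sum_congr rfl fun b _ => ?_
      rw [Finset.sum_const, nsmul_eq_mul,
        show ((Finset.univ.filter (fun y => π y = b)).card : ℝ) = c b from rfl]
      exact aux_div2 _ _ (hcpos b).ne'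
    have hLx : (1 - Matrix.diagonal (fun x => (Real.sqrt (dhat x))⁻¹) * What *
        Matrix.diagonal (fun x => (Real.sqrt (dhat x))⁻¹)).mulVec v x
        = v x - ∑ y, (Real.sqrt (dhat x))⁻¹ * What x y * ((Real.sqrt (dhat y))⁻¹ * v y) :=
      aux_lap_mulVec _ _ _ _
    rw [hLx, hsum]
    have h := heig (π x)
    simp only [Pi.smul_apply, smul_eq_mul, hv]
    calc vc (π x) / Real.sqrt (c (π x)) - (Real.sqrt (c (π x)))⁻¹ *
          ∑ b, (Real.sqrt (dc (π x)))⁻¹ * Wc (π x) b * ((Real.sqrt (dc b))⁻¹ * vc b)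
        = (Real.sqrt (c (π x)))⁻¹ * (vc (π x) -
          ∑ b, (Real.sqrt (dc (π x)))⁻¹ * Wc (π x) b * ((Real.sqrt (dc b))⁻¹ * vc b)) := by
          ring
      _ = (Real.sqrt (c (π x)))⁻¹ * (μ * vc (π x)) := by rw [h]
      _ = μ * (vc (π x) / Real.sqrt (c (π x))) := by ring
end
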